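/- Let M be a metric space and B a subset of M. For any ultrafilter U on an index set I, the Kuratowski measure of noncompactness of the ultrapower (B)_U inside the metric ultrapower (M)_U equals the Kuratowski measure of B: α_M(B) = α_U((B)_U). -/

import Mathlib

open Filter Topology


/-- The Kuratowski measure of noncompactness with respect to an explicit distance
function `d`: the infimum of all `r > 0` such that `B` can be covered by finitely many
sets of `d`-diameter at most `r`. -/
noncomputable def kurD {α : Type*} (d : α → α → ℝ) (B : Set α) : ℝ :=
  sInf {r : ℝ | 0 < r ∧ ∃ F : Finset (Set α),
    (B ⊆ ⋃ E ∈ F, E) ∧ ∀ E ∈ F, ∀ a ∈ E, ∀ b ∈ E, d a b ≤ r}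

/-- Lemma 5.2 (Kaczor–Stachura–Walczuk–Zola): for a bounded subset `B` of a metric
space `M` and an ultrafilter `U` on `I`, the Kuratowski measure of the ultrapower `(B)_U`
(the space of `B`-valued families, with the ultralimit distance
`d_U(x,y) = lim_U d(x_i, y_i)`; passing to equivalence classes changes neither diameters
nor covers) equals the Kuratowski measure of `B`. -/
theorem stmt11 {I M : Type*} [MetricSpace M] (U : Ultrafilter I) (B : Set M)
    (hB : Bornology.IsBounded B) :
    kurD (fun x y : {f : I → M // ∀ i, f i ∈ B} =>
        limUnder (U : Filter I) (fun i => dist (x.1 i) (y.1 i)))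
      Set.univ
    = kurD dist B := by
  classical
  obtain ⟨C, hC⟩ := Metric.isBounded_iff.mp hB
  have key : ∀ x y : {f : I → M // ∀ i, f i ∈ B},
      Tendsto (fun i => dist (x.1 i) (y.1 i)) (U : Filter I)
        (𝓝 (limUnder (U : Filter I) (fun i => dist (x.1 i) (y.1 i)))) := by
    intro x y
    have hmem : ∀ i, dist (x.1 i) (y.1 i) ∈ Set.Icc 0 C :=
      fun i => ⟨dist_nonneg, hC (x.2 i) (y.2 i)⟩
    have hle : ↑(U.map fun i => dist (x.1 i) (y.1 i)) ≤ 𝓟 (Set.Icc 0 C) := by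
      simp only [Ultrafilter.coe_map, Filter.le_principal_iff, Filter.mem_map]
      exact Filter.univ_mem' hmem
    obtain ⟨L, _, hL⟩ := isCompact_Icc.ultrafilter_le_nhds _ hle
    have ht : Tendsto (fun i => dist (x.1 i) (y.1 i)) (U : Filter I) (𝓝 L) := hL
    rwa [ht.limUnder_eq]
  unfold kurD
  congr 1
  ext r
  constructor
  · rintro ⟨hr, F, hcov, hdiam⟩
    refine ⟨hr, F.image (fun E => {a : M | ∃ h : a ∈ B,
        (⟨fun _ => a, fun _ => h⟩ : {f : I → M // ∀ i, f i ∈ B}) ∈ E}), ?_, ?_⟩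
    · intro a ha
      have hx := hcov (Set.mem_univ (⟨fun _ => a, fun _ => ha⟩ :
        {f : I → M // ∀ i, f i ∈ B}))
      simp only [Set.mem_iUnion] at hx
      obtain ⟨E, hE, hxE⟩ := hx
      refine Set.mem_biUnion (Finset.mem_image_of_mem _ hE) ⟨ha, hxE⟩
    · intro E' hE' a ha b hb
      simp only [Finset.mem_image] at hE'
      obtain ⟨E, hE, rfl⟩ := hE'
      obtain ⟨haB, hac⟩ := ha
      obtain ⟨hbB, hbc⟩ := hb
      have hd := hdiam E hE _ hac _ hbc
      have hconst : limUnder (U : Filter I) (fun _ : I => dist a b) = dist a b :=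
        Filter.Tendsto.limUnder_eq tendsto_const_nhds
      simpa [hconst] using hd
  · rintro ⟨hr, F, hcov, hdiam⟩
    refine ⟨hr, F.image (fun E => {x : {f : I → M // ∀ i, f i ∈ B} |
        {i | x.1 i ∈ E} ∈ U}), ?_, ?_⟩
    · intro x _
      have hU : (⋃ E ∈ (F : Set (Set M)), {i | x.1 i ∈ E}) ∈ U := by
        have hall : ∀ i, x.1 i ∈ ⋃ E ∈ F, E := fun i => hcov (x.2 i)
        have heq : (⋃ E ∈ (F : Set (Set M)), {i | x.1 i ∈ E}) = Set.univ := by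
          ext i
          simpa using hall i
        rw [heq]
        exact Filter.univ_mem
      rw [Ultrafilter.finite_biUnion_mem_iff F.finite_toSet] at hU
      obtain ⟨E, hE, hEU⟩ := hU
      exact Set.mem_biUnion (Finset.mem_image_of_mem _ hE) hEU
    · intro E' hE' x hx y hy
      simp only [Finset.mem_image] at hE'
      obtain ⟨E, hE, rfl⟩ := hE'
      have hev : ∀ᶠ i in (U : Filter I), dist (x.1 i) (y.1 i) ≤ r := by
        filter_upwards [hx, hy] with i hxi hyi
        exact hdiam E hE _ hxi _ hyi
      exact le_of_tendsto (key x y) hev
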